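/- Let α ∈ (0,1) and β > 0 with β⁴α(1-α) > 1. Then the system q₂/(1-q₂)² = β²α q₁ and q₁/(1-q₁)² = β²(1-α) q₂ has exactly one solution (q̄₁, q̄₂) ∈ (0,1)² with q̄₁ > 0 and q̄₂ > 0, in addition to the trivial solution (0,0). -/

import Mathlib

private lemma sq_eq_of_pos' {x y : ℝ} (hx : 0 < x) (hy : 0 ≤ y) (h : x ^ 2 = y ^ 2) : x = y := by
  have h2 : (x - y) * (x + y) = 0 := by linear_combination h
  rcases mul_eq_zero.mp h2 with h3 | h3
  · linarith
  · linarith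

private lemma root_unique' {c d t u : ℝ} (hd : 0 < d) (ht : 0 < t) (hu : 0 < u)
    (h1 : t ^ 2 + c * t - d = 0) (h2 : u ^ 2 + c * u - d = 0) : t = u := by
  have h3 : (t - u) * (t * u + d) = 0 := by linear_combination u * h1 - t * h2
  rcases mul_eq_zero.mp h3 with h4 | h4
  · linarith
  · nlinarith

theorem stmt8 (α β : ℝ) (hα : α ∈ Set.Ioo (0 : ℝ) 1) (hβ : 0 < β)
    (hlarge : 1 < β ^ 4 * α * (1 - α)) :
    ((0 : ℝ) / (1 - (0 : ℝ)) ^ 2 = β ^ 2 * α * 0 ∧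
      (0 : ℝ) / (1 - (0 : ℝ)) ^ 2 = β ^ 2 * (1 - α) * 0) ∧
    ∃! p : ℝ × ℝ, p.1 ∈ Set.Ioo (0 : ℝ) 1 ∧ p.2 ∈ Set.Ioo (0 : ℝ) 1 ∧
      p.2 / (1 - p.2) ^ 2 = β ^ 2 * α * p.1 ∧
      p.1 / (1 - p.1) ^ 2 = β ^ 2 * (1 - α) * p.2 := by
  obtain ⟨hα0, hα1⟩ := hα
  refine ⟨⟨by norm_num, by norm_num⟩, ?_⟩
  set a : ℝ := β ^ 2 * α with ha
  set b : ℝ := β ^ 2 * (1 - α) with hb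
  have ha0 : 0 < a := by positivity
  have hb0 : 0 < b := mul_pos (by positivity) (by linarith)
  have hab1 : 1 < a * b := by rw [ha, hb]; nlinarith [hlarge]
  have hab0 : 0 < a * b := by linarith
  clear_value a b
  clear ha hb hlarge hα0 hα1 hβ
  -- s and r
  obtain ⟨s, hs0, hs2⟩ : ∃ s : ℝ, 0 < s ∧ s ^ 2 = 1 / (a * b) :=
    ⟨Real.sqrt (1 / (a * b)), Real.sqrt_pos.mpr (by positivity), Real.sq_sqrt (by positivity)⟩
  obtain ⟨r, hr0, hr2⟩ : ∃ r : ℝ, 0 < r ∧ r ^ 2 = a / b :=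
    ⟨Real.sqrt (a / b), Real.sqrt_pos.mpr (by positivity), Real.sq_sqrt (by positivity)⟩
  have h1ab : 1 / (a * b) < 1 := by rw [div_lt_one hab0]; exact hab1
  have hs1 : s < 1 := by nlinarith [hs2, hs0, h1ab, sq_nonneg (s - 1)]
  have hras : r = a * s := by
    refine sq_eq_of_pos' hr0 (by positivity) ?_
    rw [hr2, mul_pow, hs2]; field_simp
  have hbrs : b * (r * s) = 1 := by
    rw [hras]
    have h : b * (a * s * s) = (a * b) * s ^ 2 := by ring
    rw [h, hs2]; field_simp
  have hrs0 : 0 < r * s := mul_pos hr0 hs0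
  -- the quadratic root t₀
  set c : ℝ := s * (r - 1) with hc
  obtain ⟨t₀, ht₀0, hQ0⟩ : ∃ t : ℝ, 0 < t ∧ t ^ 2 + c * t - r * s = 0 := by
    set D : ℝ := c ^ 2 + 4 * (r * s) with hD
    have hD0 : 0 < D := by positivity
    have hE2 : Real.sqrt D ^ 2 = c ^ 2 + 4 * (r * s) := Real.sq_sqrt hD0.le
    have hEgt : |c| < Real.sqrt D := by
      have h1 : Real.sqrt (c ^ 2) < Real.sqrt D := Real.sqrt_lt_sqrt (sq_nonneg c) (by nlinarith)
      rwa [Real.sqrt_sq_eq_abs] at h1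
    refine ⟨(-c + Real.sqrt D) / 2, ?_, by linear_combination hE2 / 4⟩
    have h2 := neg_le_abs c
    have h3 := le_abs_self c
    linarith
  have hts : s < t₀ := by nlinarith [hQ0, hrs0, hs1, ht₀0, hs0, hr0]
  have ht₀1 : t₀ < 1 := by nlinarith [hQ0, hs1, ht₀0, hs0, hrs0, hr0]
  have ht₀ne : t₀ ≠ 0 := ne_of_gt ht₀0
  have key1 : t₀ ^ 2 - s * t₀ = r * s * (1 - t₀) := by rw [hc] at hQ0; linear_combination hQ0
  -- the solution
  have hq₁m : (1 - t₀) ∈ Set.Ioo (0:ℝ) 1 := ⟨by linarith, by linarith⟩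
  have hst₀ : s / t₀ < 1 := (div_lt_one ht₀0).mpr hts
  have hst₀0 : 0 < s / t₀ := by positivity
  have hq₂m : (1 - s / t₀) ∈ Set.Ioo (0:ℝ) 1 := ⟨by linarith, by linarith⟩
  have he1 : (1 - s / t₀) / (1 - (1 - s / t₀)) ^ 2 = a * (1 - t₀) := by
    have h : (1 : ℝ) - (1 - s / t₀) = s / t₀ := by ring
    rw [h, div_eq_iff (by positivity : ((s / t₀) ^ 2 : ℝ) ≠ 0)]
    field_simp
    linear_combination key1 + (1 - t₀) * s * hras
  have he2 : (1 - t₀) / (1 - (1 - t₀)) ^ 2 = b * (1 - s / t₀) := by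
    have h : (1 : ℝ) - (1 - t₀) = t₀ := by ring
    rw [h, div_eq_iff (by positivity : (t₀ ^ 2 : ℝ) ≠ 0)]
    field_simp
    linear_combination (-b) * key1 - (1 - t₀) * hbrs
  refine ⟨(1 - t₀, 1 - s / t₀), ⟨hq₁m, hq₂m, he1, he2⟩, ?_⟩
  rintro ⟨p₁, p₂⟩ ⟨⟨hp10, hp11⟩, ⟨hp20, hp21⟩, hpe1, hpe2⟩
  simp only at hpe1 hpe2 hp10 hp11 hp20 hp21 ⊢
  have hT0 : (0:ℝ) < 1 - p₁ := by linarith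
  have hU0 : (0:ℝ) < 1 - p₂ := by linarith
  rw [div_eq_iff (by positivity : ((1 - p₂) ^ 2 : ℝ) ≠ 0)] at hpe1
  rw [div_eq_iff (by positivity : ((1 - p₁) ^ 2 : ℝ) ≠ 0)] at hpe2
  -- hpe1 : p₂ = a * p₁ * (1 - p₂)^2, hpe2 : p₁ = b * p₂ * (1 - p₁)^2
  have hz : p₂ * (1 - a * b * ((1 - p₁) * (1 - p₂)) ^ 2) = 0 := by
    linear_combination hpe1 + a * (1 - p₂) ^ 2 * hpe2
  have habP : a * b * ((1 - p₁) * (1 - p₂)) ^ 2 = 1 := by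
    rcases mul_eq_zero.mp hz with h | h
    · linarith
    · linarith
  have hPP : (1 - p₁) * (1 - p₂) = s := by
    refine sq_eq_of_pos' (by positivity) hs0.le ?_
    rw [hs2, eq_div_iff (ne_of_gt hab0)]
    linear_combination habP
  have e1 : b * (p₂ * (1 - p₁)) ^ 2 = p₁ * p₂ := by linear_combination (-p₂) * hpe2
  have e2 : a * (p₁ * (1 - p₂)) ^ 2 = p₁ * p₂ := by linear_combination (-p₁) * hpe1
  have hr2' : a = r ^ 2 * b := by rw [hr2]; field_simp
  have hRR : p₂ * (1 - p₁) = r * (p₁ * (1 - p₂)) := by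
    refine sq_eq_of_pos' (by positivity) (by positivity) ?_
    have hsqb : b * (p₂ * (1 - p₁)) ^ 2 = b * (r * (p₁ * (1 - p₂))) ^ 2 := by
      linear_combination e1 - e2 + (p₁ * (1 - p₂)) ^ 2 * hr2'
    exact mul_left_cancel₀ (ne_of_gt hb0) hsqb
  have hQp : (1 - p₁) ^ 2 + c * (1 - p₁) - r * s = 0 := by
    rw [hc]
    linear_combination (1 - p₁) * hRR + ((1 - p₁) + r - r * (1 - p₁)) * hPP
  have hQ0' : t₀ ^ 2 + c * t₀ - r * s = 0 := by rw [hc]; linear_combination key1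
  have hTeq : (1 - p₁) = t₀ := root_unique' hrs0 hT0 ht₀0 hQp hQ0'
  have hp₁ : p₁ = 1 - t₀ := by linarith
  have hp₂ : p₂ = 1 - s / t₀ := by
    have h : (1 - p₂) = s / t₀ := by
      rw [eq_div_iff ht₀ne, ← hTeq]; linear_combination hPP
    linarith
  exact Prod.ext hp₁ hp₂
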